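/- Let C ⊆ F_{q^m}^n be an F_{q^m}-linear rank-metric code of dimension k ≥ 1 that is rank-nondegenerate. Then the maximum rank of a codeword of C equals min{n, m}. -/

import Mathlib

open Module Submodule

/-- The rank support of a vector `v ∈ L^n` over the subfield `K`: the `K`-span of the
rows of the expansion matrix, i.e. the space of all `(φ (v 1), ..., φ (v n))` for
`K`-linear functionals `φ : L → K`. -/
noncomputable def rkSupport (K : Type) {L : Type} [Field K] [Field L] [Algebra K L]
    {n : ℕ} (v : Fin n → L) : Submodule K (Fin n → K) :=
  LinearMap.range (LinearMap.pi (fun i => LinearMap.applyₗ (v i) :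
    Fin n → Module.Dual K L →ₗ[K] K))



-- counting lemma
lemma exists_avoid {V : Type} [Fintype V] {J : Type} [Fintype J] (W : J → Set V)
    (h : ∑ j, Nat.card (W j) < Fintype.card V) : ∃ v : V, ∀ j, v ∉ W j := by
  classical
  by_contra h'
  push_neg at h'
  have hsub : (Finset.univ : Finset V) ⊆ Finset.univ.biUnion fun j => (W j).toFinset := by
    intro v _
    obtain ⟨j, hj⟩ := h' v
    exact Finset.mem_biUnion.2 ⟨j, Finset.mem_univ _, Set.mem_toFinset.2 hj⟩
  have := (Finset.card_le_card hsub).trans (Finset.card_biUnion_le)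
  simp only [Finset.card_univ] at this
  have heq : ∀ j, ((W j).toFinset.card) = Nat.card (W j) := by
    intro j; rw [Set.toFinset_card, Nat.card_eq_fintype_card]
  rw [Finset.sum_congr rfl (fun j _ => heq j)] at this
  omega

-- dual functional on K^n as a dot product
lemma dual_pi_apply {K : Type} [Field K] {n : ℕ} (ψ : Module.Dual K (Fin n → K)) (y : Fin n → K) :
    ψ y = ∑ i, y i * ψ (Pi.single i 1) := by
  have hy : y = ∑ i, y i • (Pi.single i 1 : Fin n → K) := by
    ext j
    simp [Finset.sum_apply, Pi.single_apply]
  conv_lhs => rw [hy]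
  simp [map_sum, map_smul, smul_eq_mul]

section setup
variable {K L : Type} [Field K] [Field L] [Algebra K L] {n : ℕ}

/-- The expansion map whose range is `rkSupport`. -/
noncomputable def Tmap (K : Type) [Field K] {L : Type} [Field L] [Algebra K L] {n : ℕ}
    (c : Fin n → L) : Module.Dual K L →ₗ[K] (Fin n → K) :=
  LinearMap.pi (fun i => LinearMap.applyₗ (c i))

lemma Tmap_apply (c : Fin n → L) (φ : Module.Dual K L) (i : Fin n) :
    Tmap K c φ i = φ (c i) := rfl

lemma rkSupport_eq_range (c : Fin n → L) : rkSupport K c = LinearMap.range (Tmap K c) := rfl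

/-- combination functional on the code, `L`-linear. -/
noncomputable def Fmap (C : Submodule L (Fin n → L)) (a : Fin n → K) : C →ₗ[L] L where
  toFun c := ∑ i, a i • (c : Fin n → L) i
  map_add' c d := by simp [Finset.sum_add_distrib]
  map_smul' l c := by
    simp only [SetLike.val_smul, Pi.smul_apply, RingHom.id_apply, Finset.smul_sum]
    exact Finset.sum_congr rfl fun i _ => smul_comm (a i) l _

lemma bridge (c : Fin n → L) (φ : Module.Dual K L) (a : Fin n → K) :
    ∑ i, φ (c i) * a i = φ (∑ i, a i • c i) := by
  rw [map_sum]
  exact Finset.sum_congr rfl fun i _ => by rw [map_smul, smul_eq_mul, mul_comm]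

/-- coordinate-functional map on the code, `K`-linear. -/
noncomputable def Gmap (C : Submodule L (Fin n → L)) (φ : Module.Dual K L) :
    C →ₗ[K] (Fin n → K) :=
  LinearMap.pi fun i => φ.comp (((LinearMap.proj i).comp C.subtype).restrictScalars K)

lemma Gmap_apply (C : Submodule L (Fin n → L)) (φ : Module.Dual K L) (c : C) (i : Fin n) :
    Gmap C φ c i = φ ((c : Fin n → L) i) := rfl

end setup

section main
variable {K L : Type} [Field K] [Field L] [Algebra K L] {n : ℕ}
variable (C : Submodule L (Fin n → L))

/-- nondegeneracy: no nonzero `K`-combination of coordinates vanishes on `C`. -/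
lemma nondeg_comb (hnd : (⨆ v ∈ C, rkSupport K v) = ⊤) (a : Fin n → K)
    (h : ∀ c ∈ C, ∑ i, a i • c i = 0) : a = 0 := by
  classical
  -- the dot-product functional
  let ℓ : (Fin n → K) →ₗ[K] K :=
    { toFun := fun x => ∑ i, a i * x i
      map_add' := fun x y => by simp [mul_add, Finset.sum_add_distrib]
      map_smul' := fun r x => by
        simp [Finset.mul_sum, mul_left_comm, smul_eq_mul] }
  have hle : (⨆ v ∈ C, rkSupport K v) ≤ LinearMap.ker ℓ := by
    refine iSup₂_le fun v hv => ?_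
    rintro x ⟨φ, rfl⟩
    have : ∑ i, a i * φ (v i) = 0 := by
      have := bridge v φ a
      rw [Finset.sum_congr rfl fun i _ => mul_comm (φ (v i)) (a i)] at this
      rw [this, h v hv, map_zero]
    simpa [ℓ, Tmap_apply] using this
  rw [hnd] at hle
  have hℓ : ℓ = 0 := LinearMap.ker_eq_top.mp (top_le_iff.mp hle)
  funext i
  have := LinearMap.congr_fun hℓ (Pi.single i 1)
  simpa [ℓ, Pi.single_apply] using this

end main

section main2
variable {K L : Type} [Field K] [Field L] [Algebra K L] {n : ℕ}
variable {C : Submodule L (Fin n → L)}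

lemma Fmap_surj (hnd : (⨆ v ∈ C, rkSupport K v) = ⊤) {a : Fin n → K} (ha : a ≠ 0) :
    Function.Surjective (Fmap C a) := by
  -- Fmap C a is a nonzero L-linear map to L
  have hne : ∃ c : C, Fmap C a c ≠ 0 := by
    by_contra h
    push_neg at h
    exact ha (nondeg_comb C hnd a fun c hc => h ⟨c, hc⟩)
  obtain ⟨c, hc⟩ := hne
  intro y
  refine ⟨(y * (Fmap C a c)⁻¹) • c, ?_⟩
  rw [map_smul, smul_eq_mul, mul_assoc, inv_mul_cancel₀ hc, mul_one]

lemma Gmap_surj (hnd : (⨆ v ∈ C, rkSupport K v) = ⊤) {φ : Module.Dual K L} (hφ : φ ≠ 0) :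
    Function.Surjective (Gmap C φ) := by
  classical
  rw [← LinearMap.range_eq_top]
  by_contra hr
  obtain ⟨x, hx⟩ : ∃ x, x ∉ LinearMap.range (Gmap C φ) := by
    by_contra h; push_neg at h; exact hr (eq_top_iff.2 fun x _ => h x)
  obtain ⟨ψ, hψx, hψ⟩ := Submodule.exists_dual_map_eq_bot_of_notMem hx inferInstance
  set a : Fin n → K := fun i => ψ (Pi.single i 1) with ha
  have haz : a ≠ 0 := by
    intro h0
    apply hψx
    rw [dual_pi_apply ψ x]
    have h0' : ∀ i, ψ (Pi.single i 1) = 0 := fun i => congrFun h0 i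
    simp [h0']
  -- φ vanishes on all combinations ∑ aᵢ cᵢ
  have hvan : ∀ c : C, φ (Fmap C a c) = 0 := by
    intro c
    have hmem : Gmap C φ c ∈ LinearMap.range (Gmap C φ) := ⟨c, rfl⟩
    have : ψ (Gmap C φ c) = 0 := by
      have := hψ ▸ Submodule.mem_map_of_mem (f := ψ) hmem
      exact (Submodule.mem_bot K).mp this
    rw [dual_pi_apply] at this
    have hb := bridge (K := K) (c : Fin n → L) φ a
    have : ∑ i, (Gmap C φ c) i * ψ (Pi.single i 1) = 0 := this
    simp only [Gmap_apply] at this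
    rw [show (Fmap C a c) = ∑ i, a i • (c : Fin n → L) i from rfl, ← hb]
    exact this
  -- but Fmap C a is surjective, so φ = 0
  apply hφ
  ext y
  obtain ⟨c, hc⟩ := Fmap_surj hnd haz y
  simpa [hc] using hvan c

end main2

section main3
variable {K L : Type} [Field K] [Field L] [Algebra K L] {n : ℕ}

lemma Tmap_range_top (c : Fin n → L)
    (hc : ∀ a : Fin n → K, a ≠ 0 → ∑ i, a i • c i ≠ 0) :
    LinearMap.range (Tmap K c) = ⊤ := by
  classical
  by_contra hr
  obtain ⟨x, hx⟩ : ∃ x, x ∉ LinearMap.range (Tmap K c) := by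
    by_contra h; push_neg at h; exact hr (eq_top_iff.2 fun x _ => h x)
  obtain ⟨ψ, hψx, hψ⟩ := Submodule.exists_dual_map_eq_bot_of_notMem hx inferInstance
  set a : Fin n → K := fun i => ψ (Pi.single i 1) with ha
  have haz : a ≠ 0 := by
    intro h0
    apply hψx
    rw [dual_pi_apply ψ x]
    have h0' : ∀ i, ψ (Pi.single i 1) = 0 := fun i => congrFun h0 i
    simp [h0']
  refine hc a haz ?_
  rw [← Module.forall_dual_apply_eq_zero_iff K]
  intro φ
  have hmem : Tmap K c φ ∈ LinearMap.range (Tmap K c) := ⟨φ, rfl⟩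
  have hz : ψ (Tmap K c φ) = 0 := by
    have := hψ ▸ Submodule.mem_map_of_mem (f := ψ) hmem
    exact (Submodule.mem_bot K).mp this
  rw [dual_pi_apply] at hz
  simp only [Tmap_apply] at hz
  rw [← bridge (K := K) c φ a]
  exact hz

lemma Tmap_inj (c : Fin n → L)
    (hc : ∀ φ : Module.Dual K L, φ ≠ 0 → ∃ i, φ (c i) ≠ 0) :
    Function.Injective (Tmap K c) := by
  rw [← LinearMap.ker_eq_bot]
  rw [eq_bot_iff]
  intro φ hφ
  rw [LinearMap.mem_ker] at hφ
  rw [Submodule.mem_bot]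
  by_contra hne
  obtain ⟨i, hi⟩ := hc φ hne
  exact hi (by rw [← Tmap_apply (K := K) c φ i, hφ]; rfl)

end main3

section count1
variable {K L : Type} [Field K] [Field L] [Algebra K L] [Fintype K] [Fintype L] {n m : ℕ}
variable {C : Submodule L (Fin n → L)}

lemma exists_good_comb (hm : Module.finrank K L = m) (hk : 1 ≤ Module.finrank L C)
    (hnd : (⨆ v ∈ C, rkSupport K v) = ⊤) (hnm : n ≤ m) :
    ∃ c : C, ∀ a : Fin n → K, a ≠ 0 → Fmap C a c ≠ 0 := by
  classical
  letI : Fintype C := Fintype.ofFinite _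
  set k := Module.finrank L C with hkdef
  set q := Fintype.card K with hq
  have hq1 : 1 ≤ q := Fintype.card_pos
  have hQL : Fintype.card L = q ^ m := by rw [card_eq_pow_finrank (K := K) (V := L), hm]
  -- the bad sets
  set J := {a : Fin n → K // a ≠ 0} with hJ
  set W : J → Set C := fun a => (LinearMap.ker (Fmap C a.1) : Set C) with hW
  have hcard : ∀ a : J, Nat.card (W a) = (q ^ m) ^ (k - 1) := by
    intro a
    have hsurj := Fmap_surj hnd a.2
    have hrn := LinearMap.finrank_range_add_finrank_ker (Fmap C a.1)
    rw [LinearMap.range_eq_top.mpr hsurj, finrank_top, Module.finrank_self] at hrn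
    letI : Fintype (LinearMap.ker (Fmap C a.1)) := Fintype.ofFinite _
    have : Nat.card (W a) = Fintype.card (LinearMap.ker (Fmap C a.1)) := by
      rw [hW]; rw [← Nat.card_eq_fintype_card]; rfl
    rw [this, card_eq_pow_finrank (K := L), hQL]
    congr 1
    omega
  have hC : Fintype.card C = (q ^ m) ^ k := by
    rw [card_eq_pow_finrank (K := L) (V := C), hQL]
  have hJcard : Fintype.card J ≤ q ^ n - 1 := by
    have h1 : Fintype.card J = Fintype.card (Fin n → K) - 1 := by
      have : Fintype.card {a : Fin n → K // ¬ a = 0} = Fintype.card (Fin n → K) - 1 := by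
        rw [Fintype.card_subtype_compl (p := fun a : Fin n → K => a = 0),
          Fintype.card_subtype_eq (0 : Fin n → K)]
      convert this using 2
    rw [h1, Fintype.card_fun]
    simp [← hq]
  have hsum : ∑ a : J, Nat.card (W a) < Fintype.card C := by
    rw [Finset.sum_congr rfl fun a _ => hcard a, Finset.sum_const, Finset.card_univ,
      smul_eq_mul, hC]
    have hlt : Fintype.card J * (q ^ m) ^ (k - 1) ≤ (q ^ n - 1) * (q ^ m) ^ (k - 1) :=
      Nat.mul_le_mul_right _ hJcard
    refine lt_of_le_of_lt hlt ?_
    have h2 : q ^ n - 1 < q ^ m := by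
      have := Nat.pow_le_pow_right hq1 hnm
      have := Nat.one_le_pow n q (by omega)
      omega
    calc (q ^ n - 1) * (q ^ m) ^ (k - 1) < q ^ m * (q ^ m) ^ (k - 1) :=
          (Nat.mul_lt_mul_right (Nat.pow_pos (by omega))).mpr h2
    _ = (q ^ m) ^ (1 + (k - 1)) := by rw [pow_add, pow_one]
    _ = (q ^ m) ^ k := by congr 1; omega
  obtain ⟨c, hc⟩ := exists_avoid W hsum
  exact ⟨c, fun a ha h => hc ⟨a, ha⟩ (by rw [hW]; exact h)⟩

end count1

section count2
variable {K L : Type} [Field K] [Field L] [Algebra K L] [Fintype K] [Fintype L] {n m : ℕ}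
variable {C : Submodule L (Fin n → L)}

lemma exists_good_dual (hm : Module.finrank K L = m) (hk : 1 ≤ Module.finrank L C)
    (hnd : (⨆ v ∈ C, rkSupport K v) = ⊤) (hmn : m ≤ n) :
    ∃ c : C, ∀ φ : Module.Dual K L, φ ≠ 0 → Gmap C φ c ≠ 0 := by
  classical
  letI : Fintype C := Fintype.ofFinite _
  haveI : Finite (Module.Dual K L) :=
    Finite.of_injective (fun f => (f : L → K)) DFunLike.coe_injective
  letI : Fintype (Module.Dual K L) := Fintype.ofFinite _
  set k := Module.finrank L C with hkdef
  set q := Fintype.card K with hq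
  have hq1 : 1 ≤ q := Fintype.card_pos
  have hCK : Module.finrank K C = m * k := by
    rw [← Module.finrank_mul_finrank K L C, hm]
  have hmk : m ≤ m * k := Nat.le_mul_of_pos_right m (by omega)
  -- the bad sets
  set W : {φ : Module.Dual K L // φ ≠ 0} → Set C :=
    fun φ => (LinearMap.ker (Gmap C φ.1) : Set C) with hW
  have hcard : ∀ φ : {φ : Module.Dual K L // φ ≠ 0},
      Nat.card (W φ) = q ^ (m * k - n) ∧ n ≤ m * k := by
    intro φ
    have hsurj := Gmap_surj hnd φ.2
    have hrn := LinearMap.finrank_range_add_finrank_ker (Gmap C φ.1)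
    rw [LinearMap.range_eq_top.mpr hsurj, finrank_top, Module.finrank_fin_fun, hCK] at hrn
    letI : Fintype (LinearMap.ker (Gmap C φ.1)) := Fintype.ofFinite _
    have hc : Nat.card (W φ) = Fintype.card (LinearMap.ker (Gmap C φ.1)) := by
      rw [hW]; rw [← Nat.card_eq_fintype_card]; rfl
    refine ⟨?_, by omega⟩
    rw [hc, card_eq_pow_finrank (K := K), hq]
    congr 1
    omega
  have hC : Fintype.card C = q ^ (m * k) := by
    rw [card_eq_pow_finrank (K := K) (V := C), hCK]
  have hJcard : Fintype.card {φ : Module.Dual K L // φ ≠ 0} ≤ q ^ m - 1 := by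
    have h1 : Fintype.card {φ : Module.Dual K L // ¬ φ = 0} =
        Fintype.card (Module.Dual K L) - 1 := by
      rw [Fintype.card_subtype_compl (p := fun φ : Module.Dual K L => φ = 0),
        Fintype.card_subtype_eq (0 : Module.Dual K L)]
    have h2 : Fintype.card (Module.Dual K L) = q ^ m := by
      rw [card_eq_pow_finrank (K := K) (V := Module.Dual K L), Subspace.dual_finrank_eq, hm]
    have : Fintype.card {φ : Module.Dual K L // ¬ φ = 0} = q ^ m - 1 := by rw [h1, h2]
    exact le_of_eq (by convert this using 2)
  have hsum : ∑ φ : {φ : Module.Dual K L // φ ≠ 0}, Nat.card (W φ) < Fintype.card C := by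
    rw [Finset.sum_congr rfl fun φ _ => (hcard φ).1, Finset.sum_const, Finset.card_univ,
      smul_eq_mul, hC]
    have hle : Fintype.card {φ : Module.Dual K L // φ ≠ 0} * q ^ (m * k - n) ≤
        (q ^ m - 1) * q ^ (m * k - n) := Nat.mul_le_mul_right _ hJcard
    refine lt_of_le_of_lt hle ?_
    have h2 : (0:ℕ) < q ^ m := Nat.pow_pos (by omega)
    calc (q ^ m - 1) * q ^ (m * k - n) < q ^ m * q ^ (m * k - n) :=
          (Nat.mul_lt_mul_right (Nat.pow_pos (by omega))).mpr (by omega)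
    _ = q ^ (m + (m * k - n)) := by rw [pow_add]
    _ ≤ q ^ (m * k) := Nat.pow_le_pow_right hq1 (by omega)
  obtain ⟨c, hc⟩ := exists_avoid W hsum
  exact ⟨c, fun φ hφ h => hc ⟨φ, hφ⟩ (by rw [hW]; exact h)⟩

end count2

theorem stmt_6 {K L : Type} [Field K] [Field L] [Algebra K L] [Fintype K] [Fintype L]
    {n m : ℕ} (hm : Module.finrank K L = m)
    (C : Submodule L (Fin n → L)) (hk : 1 ≤ Module.finrank L C)
    (hnd : (⨆ v ∈ C, rkSupport K v) = ⊤) :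
    IsGreatest {r : ℕ | ∃ c ∈ C, Module.finrank K (rkSupport K c) = r} (min n m) := by
  constructor
  · -- membership
    rcases le_total n m with hnm | hmn
    · obtain ⟨c, hc⟩ := exists_good_comb hm hk hnd hnm
      refine ⟨(c : Fin n → L), c.2, ?_⟩
      have htop : LinearMap.range (Tmap K (c : Fin n → L)) = ⊤ :=
        Tmap_range_top _ (fun a ha => hc a ha)
      rw [rkSupport_eq_range, htop, finrank_top, Module.finrank_fin_fun, min_eq_left hnm]
    · obtain ⟨c, hc⟩ := exists_good_dual hm hk hnd hmn
      refine ⟨(c : Fin n → L), c.2, ?_⟩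
      have hinj : Function.Injective (Tmap K (c : Fin n → L)) := by
        refine Tmap_inj _ fun φ hφ => ?_
        have := hc φ hφ
        by_contra h
        push_neg at h
        exact this (funext fun i => by rw [Gmap_apply]; exact h i)
      rw [rkSupport_eq_range, LinearMap.finrank_range_of_inj hinj,
        Subspace.dual_finrank_eq, hm, min_eq_right hmn]
  · -- upper bound
    rintro r ⟨c, hc, rfl⟩
    refine le_min ?_ ?_
    · exact (Submodule.finrank_le _).trans_eq (Module.finrank_fin_fun K)
    · rw [rkSupport_eq_range]
      exact (LinearMap.finrank_range_le _).trans_eq (by rw [Subspace.dual_finrank_eq, hm])
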